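/- Let Υ be the graph on K∪T where K induces a clique and T is an independent set completely joined to K, with edge weights γ_e = p(e)/(1-p(e)). For each k, let Z^k = Σ_{A'} q^{κ'(V,A')} Π_{e∈A'} γ_e, summed over edge subsets A' in which the vertices of T lie in exactly k connected components, where κ' counts components containing no vertex of T; let Z = Σ_k Z^k. Then Z^k/Z = Pr(Y(A)=k), where A is drawn from the random cluster distribution on the complete graph on K∪T (with p(e)=1 for pairs within T) and Y(A) is the number of components of (V, A∖T^(2)) containing vertices of T. -/

import Mathlib

open scoped Classical

/-- The connectivity setoid of the (hyper)graph `(V, F)`. -/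
noncomputable def connSetoid {V : Type*} (F : Finset (Finset V)) : Setoid V :=
  Relation.EqvGen.setoid (fun u v : V => ∃ f ∈ F, u ∈ f ∧ v ∈ f)

/-- Number of connected components of the graph `(V, F)`. -/
noncomputable def kappa {V : Type*} [Fintype V] (F : Finset (Finset V)) : ℕ :=
  Nat.card (Quotient (connSetoid F))

/-- The number `Y(F)` of connected components of `(V, F)` containing vertices
of the terminal set `T`. -/
noncomputable def Ycomp {V : Type*} [Fintype V] (T : Finset V) (F : Finset (Finset V)) : ℕ :=
  Nat.card (Quotient (Setoid.comap (Subtype.val : {x : V // x ∈ T} → V) (connSetoid F)))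

/-- The number `κ'(F)` of connected components of `(V, F)` containing no
vertex of the terminal set `T`. -/
noncomputable def kappaNoT {V : Type*} [Fintype V] (T : Finset V) (F : Finset (Finset V)) : ℕ :=
  Nat.card {c : Quotient (connSetoid F) // ∀ v ∈ T, Quotient.mk (connSetoid F) v ≠ c}

section KappaAux

variable {V : Type*} [Fintype V] [DecidableEq V] {T : Finset V}

abbrev crel (F : Finset (Finset V)) : V → V → Prop := fun u v => ∃ f ∈ F, u ∈ f ∧ v ∈ f

lemma connSetoid_mk_eq {F : Finset (Finset V)} {u v : V} :
    (Quotient.mk (connSetoid F) u = Quotient.mk (connSetoid F) v) ↔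
      Relation.EqvGen (crel F) u v := by
  rw [Quotient.eq]
  exact Iff.rfl

lemma eqvGen_mono' {F G : Finset (Finset V)} (h : F ⊆ G) {u v : V}
    (huv : Relation.EqvGen (crel F) u v) : Relation.EqvGen (crel G) u v := by
  refine Relation.EqvGen.mono ?_ u v huv
  rintro a b ⟨f, hf, ha, hb⟩
  exact ⟨f, h hf, ha, hb⟩

lemma eqvGen_union_cases {A' ET' : Finset (Finset V)} (hET : ∀ f ∈ ET', f ⊆ T) {u v : V}
    (h : Relation.EqvGen (crel (A' ∪ ET')) u v) :
    Relation.EqvGen (crel A') u v ∨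
      ((∃ t ∈ T, Relation.EqvGen (crel A') u t) ∧
        (∃ t ∈ T, Relation.EqvGen (crel A') v t)) := by
  induction h with
  | rel x y hxy =>
    obtain ⟨f, hf, hx, hy⟩ := hxy
    rcases Finset.mem_union.1 hf with h1 | h2
    · exact Or.inl (Relation.EqvGen.rel _ _ ⟨f, h1, hx, hy⟩)
    · exact Or.inr ⟨⟨x, hET f h2 hx, Relation.EqvGen.refl x⟩,
        ⟨y, hET f h2 hy, Relation.EqvGen.refl y⟩⟩
  | refl x => exact Or.inl (Relation.EqvGen.refl x)
  | symm x y _ ih =>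
    rcases ih with h | ⟨h1, h2⟩
    · exact Or.inl (h.symm _ _)
    · exact Or.inr ⟨h2, h1⟩
  | trans x y z _ _ ih1 ih2 =>
    rcases ih1 with h1 | ⟨ha, hb⟩
    · rcases ih2 with h2 | ⟨hc, hd⟩
      · exact Or.inl (h1.trans _ _ _ h2)
      · obtain ⟨t, ht, htc⟩ := hc
        exact Or.inr ⟨⟨t, ht, h1.trans _ _ _ htc⟩, hd⟩
    · rcases ih2 with h2 | ⟨hc, hd⟩
      · obtain ⟨t, ht, htb⟩ := hb
        exact Or.inr ⟨ha, ⟨t, ht, (h2.symm _ _).trans _ _ _ htb⟩⟩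
      · exact Or.inr ⟨ha, hd⟩

/-- The classes avoiding `T` are in bijection. -/
lemma card_noT_eq {A' ET' : Finset (Finset V)} (hET : ∀ f ∈ ET', f ⊆ T) :
    Nat.card {c : Quotient (connSetoid (A' ∪ ET')) //
        ∀ v ∈ T, Quotient.mk (connSetoid (A' ∪ ET')) v ≠ c} = kappaNoT T A' := by
  rw [kappaNoT]
  apply Nat.card_congr
  symm
  have hmono : ∀ a b : V, (connSetoid A').r a b → (connSetoid (A' ∪ ET')).r (id a) (id b) :=
    fun a b hab => eqvGen_mono' Finset.subset_union_left hab
  refine Equiv.ofBijective (fun c => ⟨Quotient.map id hmono c.1, ?_⟩) ⟨?_, ?_⟩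
  · intro v hv heq
    obtain ⟨u, hu⟩ := Quotient.exists_rep c.1
    rw [← hu, Quotient.map_mk] at heq
    have h1 : Relation.EqvGen (crel (A' ∪ ET')) v u := connSetoid_mk_eq.1 heq
    rcases eqvGen_union_cases hET h1 with h | ⟨_, ⟨t, ht, htu⟩⟩
    · exact c.2 v hv (hu ▸ connSetoid_mk_eq.2 h)
    · exact c.2 t ht (hu ▸ connSetoid_mk_eq.2 (htu.symm _ _))
  · rintro ⟨c1, hc1⟩ ⟨c2, hc2⟩ heq
    obtain ⟨u1, hu1⟩ := Quotient.exists_rep c1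
    obtain ⟨u2, hu2⟩ := Quotient.exists_rep c2
    subst hu1; subst hu2
    have heq' : Quotient.map id hmono (Quotient.mk (connSetoid A') u1) =
        Quotient.map id hmono (Quotient.mk (connSetoid A') u2) := congrArg Subtype.val heq
    simp only [Quotient.map_mk, id_eq] at heq'
    have h1 : Relation.EqvGen (crel (A' ∪ ET')) u1 u2 := connSetoid_mk_eq.1 heq'
    rcases eqvGen_union_cases hET h1 with h | ⟨⟨t, ht, htu⟩, _⟩
    · exact Subtype.ext (connSetoid_mk_eq.2 h)
    · exact absurd (connSetoid_mk_eq.2 (htu.symm _ _)) (hc1 t ht)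
  · rintro ⟨d, hd⟩
    obtain ⟨u, hu⟩ := Quotient.exists_rep d
    have havoid : ∀ v ∈ T, Quotient.mk (connSetoid A') v ≠ Quotient.mk (connSetoid A') u := by
      intro v hv heq
      exact hd v hv (hu ▸ connSetoid_mk_eq.2 (eqvGen_mono' Finset.subset_union_left
        (connSetoid_mk_eq.1 heq)))
    exact ⟨⟨Quotient.mk (connSetoid A') u, havoid⟩,
      Subtype.ext (by simpa [Quotient.map_mk] using hu)⟩

lemma kappa_union_eq {A' ET' : Finset (Finset V)} (hET : ∀ f ∈ ET', f ⊆ T)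
    (hwire : ∀ t ∈ T, ∀ t' ∈ T, t ≠ t' → ({t, t'} : Finset V) ∈ ET') :
    kappa (A' ∪ ET') = kappaNoT T A' + (if T.Nonempty then 1 else 0) := by
  have hwired : ∀ t ∈ T, ∀ t' ∈ T, Quotient.mk (connSetoid (A' ∪ ET')) t =
      Quotient.mk (connSetoid (A' ∪ ET')) t' := by
    intro t ht t' ht'
    by_cases h : t = t'
    · rw [h]
    · exact connSetoid_mk_eq.2 (Relation.EqvGen.rel _ _
        ⟨{t, t'}, Finset.mem_union_right _ (hwire t ht t' ht' h), by simp, by simp⟩)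
  have hpart : kappa (A' ∪ ET') =
      Nat.card {c : Quotient (connSetoid (A' ∪ ET')) //
        ∀ v ∈ T, Quotient.mk (connSetoid (A' ∪ ET')) v ≠ c} +
      Nat.card {c : Quotient (connSetoid (A' ∪ ET')) //
        ¬ ∀ v ∈ T, Quotient.mk (connSetoid (A' ∪ ET')) v ≠ c} := by
    rw [kappa, ← Nat.card_sum]
    exact Nat.card_congr (Equiv.sumCompl _).symm
  rw [hpart, card_noT_eq hET]
  congr 1
  rcases T.eq_empty_or_nonempty with hre | hne
  · rw [if_neg (by simp [hre])]
    have : IsEmpty {c : Quotient (connSetoid (A' ∪ ET')) //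
        ¬ ∀ v ∈ T, Quotient.mk (connSetoid (A' ∪ ET')) v ≠ c} := by
      refine ⟨fun c => c.2 ?_⟩
      intro v hv
      simp [hre] at hv
    exact Nat.card_of_isEmpty
  · obtain ⟨t0, ht0⟩ := hne
    rw [if_pos ⟨t0, ht0⟩, Nat.card_eq_one_iff_unique]
    constructor
    · refine ⟨fun c1 c2 => ?_⟩
      obtain ⟨c1, h1⟩ := c1
      obtain ⟨c2, h2⟩ := c2
      push_neg at h1 h2
      obtain ⟨v1, hv1, he1⟩ := h1
      obtain ⟨v2, hv2, he2⟩ := h2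
      exact Subtype.ext (show c1 = c2 by rw [← he1, ← he2, hwired v1 hv1 v2 hv2])
    · exact ⟨⟨Quotient.mk _ t0, by push_neg; exact ⟨t0, ht0, rfl⟩⟩⟩

end KappaAux

/-- Wiring lemma: `Z^k/Z = Pr(Y(A)=k)` where `A` is a random cluster sample on
the complete graph on `K ∪ T` (edges within `T` having `p = 1`) and `Y(A)` is
the number of components of `(V, A∖T⁽²⁾)` meeting `T`. -/
theorem wiring_lemma {V : Type*} [Fintype V] [DecidableEq V]
    (T : Finset V) (q : ℝ) (hq : 0 < q) (p : Finset V → ℝ)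
    (hpT : ∀ e : Finset V, e.card = 2 → e ⊆ T → p e = 1)
    (hp : ∀ e : Finset V, e.card = 2 → ¬ e ⊆ T → 0 ≤ p e ∧ p e < 1)
    (k : ℕ) :
    let Eall : Finset (Finset V) := Finset.univ.powersetCard 2
    let ET : Finset (Finset V) := Eall.filter (fun e => e ⊆ T)
    let EΥ : Finset (Finset V) := Eall \ ET
    let γ : Finset V → ℝ := fun e => p e / (1 - p e)
    let Zk : ℝ := ∑ A ∈ EΥ.powerset,
      if Ycomp T A = k then q ^ kappaNoT T A * ∏ e ∈ A, γ e else 0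
    let Z : ℝ := ∑ A ∈ EΥ.powerset, q ^ kappaNoT T A * ∏ e ∈ A, γ e
    let w : Finset (Finset V) → ℝ := fun A =>
      q ^ kappa A * (∏ e ∈ A, p e) * ∏ e ∈ Eall \ A, (1 - p e)
    Zk / Z = (∑ A ∈ Eall.powerset, if Ycomp T (A \ ET) = k then w A else 0) /
        (∑ A ∈ Eall.powerset, w A) := by
  intro Eall ET EΥ γ Zk Z w
  -- Basic facts about the edge sets
  have hETsub : ET ⊆ Eall := Finset.filter_subset _ _
  have hET_T : ∀ f ∈ ET, f ⊆ T := fun f hf => (Finset.mem_filter.1 hf).2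
  have hcard : ∀ e ∈ Eall, e.card = 2 := fun e he => (Finset.mem_powersetCard.1 he).2
  have hwire : ∀ t ∈ T, ∀ t' ∈ T, t ≠ t' → ({t, t'} : Finset V) ∈ ET := by
    intro t ht t' ht' hne
    refine Finset.mem_filter.2 ⟨Finset.mem_powersetCard.2 ⟨Finset.subset_univ _,
      Finset.card_pair hne⟩, ?_⟩
    intro x hx
    rcases Finset.mem_insert.1 hx with h | h
    · exact h ▸ ht
    · exact (Finset.mem_singleton.1 h) ▸ ht'
  have hEΥ : ∀ e ∈ EΥ, e.card = 2 ∧ ¬ e ⊆ T := by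
    intro e he
    obtain ⟨h1, h2⟩ := Finset.mem_sdiff.1 he
    exact ⟨hcard e h1, fun hsub => h2 (Finset.mem_filter.2 ⟨h1, hsub⟩)⟩
  have hple : ∀ e ∈ EΥ, 0 ≤ p e ∧ p e < 1 := fun e he => hp e (hEΥ e he).1 (hEΥ e he).2
  set C : ℝ := ∏ e ∈ EΥ, (1 - p e) with hCdef
  set c0 : ℕ := if T.Nonempty then 1 else 0 with hc0def
  have hC : 0 < C := Finset.prod_pos (fun e he => sub_pos.2 (hple e he).2)
  have hmul : q ^ c0 * C ≠ 0 := by positivity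
  -- the key pointwise computation
  have key : ∀ A' ∈ EΥ.powerset,
      w (A' ∪ ET) = q ^ c0 * C * (q ^ kappaNoT T A' * ∏ e ∈ A', γ e) := by
    intro A' hA'
    have hA'sub : A' ⊆ EΥ := Finset.mem_powerset.1 hA'
    have hdisj : Disjoint A' ET :=
      Finset.disjoint_of_subset_left hA'sub Finset.sdiff_disjoint
    have hk : kappa (A' ∪ ET) = kappaNoT T A' + c0 := kappa_union_eq hET_T hwire
    show q ^ kappa (A' ∪ ET) * (∏ e ∈ A' ∪ ET, p e) *
        ∏ e ∈ Eall \ (A' ∪ ET), (1 - p e) = _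
    rw [hk, pow_add, Finset.prod_union hdisj]
    have hET1 : ∏ e ∈ ET, p e = 1 :=
      Finset.prod_eq_one (fun e he => hpT e (hcard e (hETsub he)) (hET_T e he))
    have hsd : Eall \ (A' ∪ ET) = EΥ \ A' := by
      ext e
      simp only [EΥ, Finset.mem_sdiff, Finset.mem_union]
      tauto
    rw [hET1, hsd, mul_one]
    have hpe : ∏ e ∈ A', p e = (∏ e ∈ A', γ e) * ∏ e ∈ A', (1 - p e) := by
      rw [← Finset.prod_mul_distrib]
      refine Finset.prod_congr rfl (fun e he => ?_)
      have h1 : (1 : ℝ) - p e ≠ 0 := ne_of_gt (sub_pos.2 (hple e (hA'sub he)).2)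
      show p e = p e / (1 - p e) * (1 - p e)
      rw [div_mul_cancel₀ _ h1]
    rw [hpe]
    have hfull : (∏ e ∈ A', (1 - p e)) * ∏ e ∈ EΥ \ A', (1 - p e) = C := by
      rw [mul_comm]
      exact Finset.prod_sdiff hA'sub
    rw [← hfull]
    ring
  -- reindexing the sums
  have hzero : ∀ A : Finset (Finset V), ¬ ET ⊆ A → w A = 0 := by
    intro A hnsub
    obtain ⟨e, he, heA⟩ := Finset.not_subset.1 hnsub
    have h1 : (1 : ℝ) - p e = 0 := by
      rw [hpT e (hcard e (hETsub he)) (hET_T e he)]; ring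
    show q ^ kappa A * (∏ e ∈ A, p e) * ∏ e ∈ Eall \ A, (1 - p e) = 0
    rw [Finset.prod_eq_zero (Finset.mem_sdiff.2 ⟨hETsub he, heA⟩) h1, mul_zero]
  have reindex : ∀ g : Finset (Finset V) → ℝ, (∀ A, ¬ ET ⊆ A → g A = 0) →
      ∑ A ∈ Eall.powerset, g A = ∑ A' ∈ EΥ.powerset, g (A' ∪ ET) := by
    intro g hg
    rw [← Finset.sum_filter_of_ne (p := fun A => ET ⊆ A)
      (fun A _ hne => by by_contra hn; exact hne (hg A hn))]
    refine Finset.sum_nbij' (fun A => A \ ET) (fun A' => A' ∪ ET) ?_ ?_ ?_ ?_ ?_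
    · intro A hA
      obtain ⟨hA1, _⟩ := Finset.mem_filter.1 hA
      exact Finset.mem_powerset.2
        (Finset.sdiff_subset_sdiff (Finset.mem_powerset.1 hA1) le_rfl)
    · intro A' hA'
      refine Finset.mem_filter.2 ⟨Finset.mem_powerset.2 (Finset.union_subset ?_ hETsub),
        Finset.subset_union_right⟩
      exact (Finset.mem_powerset.1 hA').trans Finset.sdiff_subset
    · intro A hA
      exact Finset.sdiff_union_of_subset (Finset.mem_filter.1 hA).2
    · intro A' hA'
      exact Finset.union_sdiff_cancel_right
        (Finset.disjoint_of_subset_left (Finset.mem_powerset.1 hA') Finset.sdiff_disjoint)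
    · intro A hA
      rw [Finset.sdiff_union_of_subset (Finset.mem_filter.1 hA).2]
  have hre : ∀ A' ∈ EΥ.powerset, (A' ∪ ET) \ ET = A' := fun A' hA' =>
    Finset.union_sdiff_cancel_right
      (Finset.disjoint_of_subset_left (Finset.mem_powerset.1 hA') Finset.sdiff_disjoint)
  -- numerator
  have hnum : ∑ A ∈ Eall.powerset, (if Ycomp T (A \ ET) = k then w A else 0)
      = q ^ c0 * C * Zk := by
    rw [reindex _ (fun A hn => by simp [hzero A hn])]
    show _ = q ^ c0 * C *
      (∑ A ∈ EΥ.powerset, if Ycomp T A = k then q ^ kappaNoT T A * ∏ e ∈ A, γ e else 0)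
    rw [Finset.mul_sum]
    refine Finset.sum_congr rfl (fun A' hA' => ?_)
    rw [hre A' hA']
    split_ifs with h
    · exact key A' hA'
    · ring
  -- denominator
  have hden : ∑ A ∈ Eall.powerset, w A = q ^ c0 * C * Z := by
    rw [reindex _ (fun A hn => hzero A hn)]
    show _ = q ^ c0 * C * (∑ A ∈ EΥ.powerset, q ^ kappaNoT T A * ∏ e ∈ A, γ e)
    rw [Finset.mul_sum]
    exact Finset.sum_congr rfl key
  rw [hnum, hden]
  exact (mul_div_mul_left _ _ hmul).symm
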